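/- For every real s < 0, the Legendre transform of the Bose–Einstein entropy satisfies sup_{n > 0} ( s·n − (n·log n − (n+1)·log(n+1)) ) = −log(1 − exp(s)), and the supremum is attained at the unique point n* = 1/(exp(−s) − 1). -/

import Mathlib

/-- For every `s < 0`, the Legendre transform of the Bose–Einstein entropy
`h(n) = n·log n − (n+1)·log(n+1)` satisfies
`sup_{n > 0} (s·n − h(n)) = −log(1 − exp s)`, the supremum being attained exactly at the
unique point `n* = 1/(exp(−s) − 1)`. -/
theorem legendre_transform_boseEinstein_entropy (s : ℝ) (hs : s < 0) :
    IsGreatest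
      {y : ℝ | ∃ n : ℝ, 0 < n ∧
        y = s * n - (n * Real.log n - (n + 1) * Real.log (n + 1))}
      (-Real.log (1 - Real.exp s)) ∧
    ∀ n : ℝ, 0 < n →
      (s * n - (n * Real.log n - (n + 1) * Real.log (n + 1))
          = -Real.log (1 - Real.exp s)
        ↔ n = 1 / (Real.exp (-s) - 1)) := by
  set E := Real.exp s with hE
  have hE0 : 0 < E := Real.exp_pos s
  have hE1 : E < 1 := by
    rw [hE, ← Real.exp_zero]
    exact Real.exp_lt_exp.mpr hs
  have h1E : 0 < 1 - E := by linarith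
  set L := Real.log (1 - E) with hL
  set m : ℝ := E / (1 - E) with hmdef
  have hm0 : 0 < m := div_pos hE0 h1E
  have hm1 : m + 1 = 1 / (1 - E) := by
    rw [hmdef]
    field_simp
    ring
  have hns : 1 / (Real.exp (-s) - 1) = m := by
    have hinv : Real.exp (-s) - 1 = (1 - E) / E := by
      rw [Real.exp_neg, ← hE]
      field_simp
    rw [hinv, one_div_div, hmdef]
  have hlogm : Real.log m = s - L := by
    rw [hmdef, Real.log_div (ne_of_gt hE0) (ne_of_gt h1E), hE, Real.log_exp]
  have hlogm1 : Real.log (m + 1) = -L := by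
    rw [hm1, one_div, Real.log_inv]
  -- value at the critical point
  have hval : s * m - (m * Real.log m - (m + 1) * Real.log (m + 1)) = -L := by
    rw [hlogm, hlogm1]; ring
  -- expansion used for the upper bound
  have expand : ∀ n : ℝ, 0 < n →
      s * n - (n * Real.log n - (n + 1) * Real.log (n + 1)) + L
        = n * Real.log (E * (n + 1) / n) + Real.log ((n + 1) * (1 - E)) := by
    intro n hn
    have h1 : Real.log (E * (n + 1) / n)
        = s + Real.log (n + 1) - Real.log n := by
      rw [Real.log_div (by positivity) (ne_of_gt hn),
        Real.log_mul (ne_of_gt hE0) (by positivity), hE, Real.log_exp]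
    have h2 : Real.log ((n + 1) * (1 - E)) = Real.log (n + 1) + L := by
      rw [Real.log_mul (by positivity) (ne_of_gt h1E), hL]
    rw [h1, h2]; ring
  -- upper bound, strict when n ≠ m
  have key : ∀ n : ℝ, 0 < n →
      s * n - (n * Real.log n - (n + 1) * Real.log (n + 1)) ≤ -L ∧
      (E * (n + 1) ≠ n →
        s * n - (n * Real.log n - (n + 1) * Real.log (n + 1)) < -L) := by
    intro n hn
    have hb : Real.log ((n + 1) * (1 - E)) ≤ (n + 1) * (1 - E) - 1 :=
      Real.log_le_sub_one_of_pos (by positivity)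
    have hx0 : 0 < E * (n + 1) / n := by positivity
    have heq := expand n hn
    constructor
    · have ha : Real.log (E * (n + 1) / n) ≤ E * (n + 1) / n - 1 :=
        Real.log_le_sub_one_of_pos hx0
      have ha' : n * Real.log (E * (n + 1) / n) ≤ E * (n + 1) - n := by
        have := mul_le_mul_of_nonneg_left ha hn.le
        have hid : n * (E * (n + 1) / n - 1) = E * (n + 1) - n := by
          field_simp
        linarith [this, hid.le]
      nlinarith [ha', hb, heq]
    · intro hne
      have hx1 : E * (n + 1) / n ≠ 1 := by
        intro h
        apply hne
        field_simp at h
        linarith [h]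
      have ha : Real.log (E * (n + 1) / n) < E * (n + 1) / n - 1 :=
        Real.log_lt_sub_one_of_pos hx0 hx1
      have ha' : n * Real.log (E * (n + 1) / n) < E * (n + 1) - n := by
        have := mul_lt_mul_of_pos_left ha hn
        have hid : n * (E * (n + 1) / n - 1) = E * (n + 1) - n := by
          field_simp
        linarith [this, hid.le]
      nlinarith [ha', hb, heq]
  constructor
  · constructor
    · exact ⟨m, hm0, hval.symm⟩
    · rintro y ⟨n, hn, rfl⟩
      exact (key n hn).1
  · intro n hn
    constructor
    · intro h
      by_contra hne
      have hEn : E * (n + 1) ≠ n := by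
        intro hEn
        apply hne
        rw [hns, hmdef]
        rw [eq_div_iff (ne_of_gt h1E)]
        linarith [hEn]
      have := (key n hn).2 hEn
      linarith [this, h.le, h.ge]
    · intro h
      rw [hns] at h
      rw [h]
      exact hval
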